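/- Let I ⊆ K[x₁,…,xₙ] be a radical proper ideal with K[x₁,…,xₙ]/I finite-dimensional over K, and suppose all points of V(I) have coordinates in K. Then the number of points of V(I) equals dim_K K[x₁,…,xₙ]/I, and evaluation at the points of V(I) induces a K-algebra isomorphism K[x₁,…,xₙ]/I ≅ K^m. -/

import Mathlib

open MvPolynomial

set_option maxHeartbeats 1000000
set_option synthInstance.maxHeartbeats 400000

/-- Lagrange-type interpolation for multivariate polynomials: any function on a finite
set of distinct points of `Kⁿ` is realized by a polynomial. -/
theorem exists_mvpoly_eval_eq {K : Type*} [Field K] {n : ℕ} {m : Type*} [Fintype m]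
    (p : m → (Fin n → K)) (hp : Function.Injective p) (g : m → K) :
    ∃ f : MvPolynomial (Fin n) K, ∀ j, eval (p j) f = g j := by
  classical
  have key : ∀ j k : m, ∃ q : MvPolynomial (Fin n) K,
      eval (p j) q = 1 ∧ (p j ≠ p k → eval (p k) q = 0) := by
    intro j k
    by_cases h : p j = p k
    · exact ⟨1, by simp, fun h' => absurd h h'⟩
    · obtain ⟨i, hi⟩ := Function.ne_iff.mp h
      refine ⟨C (p j i - p k i)⁻¹ * (X i - C (p k i)), ?_, fun _ => ?_⟩
      · simp [inv_mul_cancel₀ (sub_ne_zero.mpr hi)]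
      · simp
  choose q hq1 hq0 using key
  refine ⟨∑ j, C (g j) * ∏ k, q j k, fun l => ?_⟩
  rw [map_sum, Finset.sum_eq_single l]
  · rw [map_mul, map_prod, eval_C, Finset.prod_eq_one fun k _ => hq1 l k, mul_one]
  · intro j _ hjl
    rw [map_mul, map_prod, Finset.prod_eq_zero (Finset.mem_univ l), mul_zero]
    exact hq0 j l fun h => hjl (hp h)
  · intro h
    exact absurd (Finset.mem_univ l) h

theorem aeval_self_eq_eval {K : Type*} [Field K] {n : ℕ} (a : Fin n → K)
    (f : MvPolynomial (Fin n) K) : aeval a f = eval a f := by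
  rw [aeval_def, Algebra.algebraMap_self]
  rfl

/-- For a radical proper ideal `I` of `K[x₁,…,xₙ]` with finite-dimensional quotient all of
whose zeros (over an algebraic closure) are `K`-rational, the number of points of `V(I)`
equals `dim_K K[x₁,…,xₙ]/I`, and evaluation at the points of `V(I)` induces a `K`-algebra
isomorphism `K[x₁,…,xₙ]/I ≅ K^m`. -/
theorem radical_ideal_evaluation_iso
    {K : Type*} [Field K] {n : ℕ}
    (I : Ideal (MvPolynomial (Fin n) K)) (hI : I ≠ ⊤) (hrad : I.IsRadical)
    (hfd : FiniteDimensional K (MvPolynomial (Fin n) K ⧸ I))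
    (hK : ∀ a : Fin n → AlgebraicClosure K, (∀ f ∈ I, aeval a f = 0) →
      ∀ i, a i ∈ Set.range (algebraMap K (AlgebraicClosure K))) :
    Nat.card {a : Fin n → K // ∀ f ∈ I, eval a f = 0} =
      Module.finrank K (MvPolynomial (Fin n) K ⧸ I) ∧
    ∃ e : (MvPolynomial (Fin n) K ⧸ I) ≃ₐ[K]
        ({a : Fin n → K // ∀ f ∈ I, eval a f = 0} → K),
      ∀ f : MvPolynomial (Fin n) K,
        e (Ideal.Quotient.mk I f) = fun a => eval a.1 f := by
  classical
  set R := MvPolynomial (Fin n) K with hR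
  set A := R ⧸ I with hA
  haveI : IsReduced A := (Ideal.isRadical_iff_quotient_reduced I).mp hrad
  haveI : IsArtinianRing A := IsArtinianRing.of_finite K A
  -- every maximal (indeed prime) ideal of `A` comes from a `K`-rational point of `V(I)`
  have point_of_max : ∀ p : Ideal A, p.IsMaximal → ∃ a : Fin n → K,
      (∀ f ∈ I, eval a f = 0) ∧ ∀ f : R, (Ideal.Quotient.mk I f ∈ p ↔ eval a f = 0) := by
    intro p hp
    haveI := hp
    letI : Field (A ⧸ p) := Ideal.Quotient.field p
    haveI : Module.Finite K (A ⧸ p) :=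
      Module.Finite.of_surjective (Ideal.Quotient.mkₐ K p).toLinearMap
        Ideal.Quotient.mk_surjective
    haveI : Algebra.IsAlgebraic K (A ⧸ p) := Algebra.IsAlgebraic.of_finite K _
    haveI : NoZeroSMulDivisors K (A ⧸ p) :=
      inferInstance
    let χ : (A ⧸ p) →ₐ[K] AlgebraicClosure K := IsAlgClosed.lift
    let θ : R →ₐ[K] AlgebraicClosure K :=
      χ.comp ((Ideal.Quotient.mkₐ K p).comp (Ideal.Quotient.mkₐ K I))
    have hθ : ∀ f ∈ I, θ f = 0 := by
      intro f hf
      have h0 : Ideal.Quotient.mkₐ K I f = 0 := Ideal.Quotient.eq_zero_iff_mem.mpr hf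
      simp only [θ, AlgHom.comp_apply, h0, map_zero]
    have hrat : ∀ i, θ (X i) ∈ Set.range (algebraMap K (AlgebraicClosure K)) := by
      intro i
      refine hK (fun i => θ (X i)) (fun f hf => ?_) i
      have : aeval (fun i => θ (X i)) f = θ f := by
        conv_rhs => rw [aeval_unique θ]
        rfl
      rw [this, hθ f hf]
    choose a ha using hrat
    have hθa : ∀ f : R, θ f = algebraMap K (AlgebraicClosure K) (eval a f) := by
      intro f
      conv_lhs => rw [aeval_unique θ]
      have hfun : (θ ∘ X : Fin n → AlgebraicClosure K) =
          fun i => algebraMap K (AlgebraicClosure K) (a i) := funext fun i => (ha i).symm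
      rw [hfun]
      have : eval a f = eval₂ (RingHom.id K) a f := rfl
      rw [this, eval₂_comp_left (algebraMap K (AlgebraicClosure K)) (RingHom.id K) a f,
        aeval_def]
      simp [Function.comp_def]
    have hinj : Function.Injective (algebraMap K (AlgebraicClosure K)) :=
      (algebraMap K (AlgebraicClosure K)).injective
    refine ⟨a, fun f hf => hinj (by rw [← hθa, hθ f hf, map_zero]), fun f => ?_⟩
    have hθχ : θ f = χ (Ideal.Quotient.mk p (Ideal.Quotient.mk I f)) := rfl
    have hker : Ideal.Quotient.mk I f ∈ p ↔ θ f = 0 := by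
      constructor
      · intro h
        have h0 : Ideal.Quotient.mk p (Ideal.Quotient.mk I f) = 0 :=
          Ideal.Quotient.eq_zero_iff_mem.mpr h
        rw [hθχ, h0, map_zero]
      · intro h
        have hχ : Function.Injective χ := fun x y hxy =>
          RingHom.injective (χ : (A ⧸ p) →+* AlgebraicClosure K) hxy
        have h0 : Ideal.Quotient.mk p (Ideal.Quotient.mk I f) = 0 := by
          apply hχ
          rw [map_zero, ← hθχ]
          exact h
        exact Ideal.Quotient.eq_zero_iff_mem.mp h0
    rw [hker, hθa]
    exact map_eq_zero_iff _ hinj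
  -- the set of points is finite
  haveI : Finite {J : Ideal A // J.IsPrime} := 
    Finite.of_injective (fun J => (⟨J.1, J.2⟩ : PrimeSpectrum A))
      (fun x y h => Subtype.ext (congrArg PrimeSpectrum.asIdeal h))
  let ev : {a : Fin n → K // ∀ f ∈ I, eval a f = 0} → (A →+* K) := fun a =>
    Ideal.Quotient.lift I (eval a.1) (fun f hf => a.2 f hf)
  have hev : ∀ a (f : R), ev a (Ideal.Quotient.mk I f) = eval a.1 f := fun a f =>
    Ideal.Quotient.lift_mk I _ _
  have hfinS : Finite {a : Fin n → K // ∀ f ∈ I, eval a f = 0} := by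
    refine Finite.of_injective
      (fun a => (⟨RingHom.ker (ev a), RingHom.ker_isPrime _⟩ : {J : Ideal A // J.IsPrime}))
      ?_
    intro a b hab
    have hker : RingHom.ker (ev a) = RingHom.ker (ev b) := congrArg Subtype.val hab
    refine Subtype.ext (funext fun i => ?_)
    have hmem : Ideal.Quotient.mk I (X i - C (a.1 i)) ∈ RingHom.ker (ev a) := by
      rw [RingHom.mem_ker, hev]
      simp
    rw [hker, RingHom.mem_ker, hev] at hmem
    simp only [map_sub, eval_X, eval_C, sub_eq_zero] at hmem
    exact hmem.symm
  haveI := hfinS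
  haveI : Fintype {a : Fin n → K // ∀ f ∈ I, eval a f = 0} := Fintype.ofFinite _
  -- the evaluation algebra homomorphism
  let evA : R →ₐ[K] ({a : Fin n → K // ∀ f ∈ I, eval a f = 0} → K) :=
    Pi.algHom _ _ fun a => aeval a.1
  have hevA : ∀ (f : R) a, evA f a = eval a.1 f := fun f a => aeval_self_eq_eval _ _
  have hevA0 : ∀ f ∈ I, evA f = 0 := fun f hf => funext fun a => by
    rw [hevA]; exact a.2 f hf
  let Φ : A →ₐ[K] ({a : Fin n → K // ∀ f ∈ I, eval a f = 0} → K) :=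
    Ideal.Quotient.liftₐ I evA hevA0
  have hΦmk : ∀ f : R, Φ (Ideal.Quotient.mk I f) = fun a => eval a.1 f := by
    intro f
    funext a
    rw [show Φ (Ideal.Quotient.mk I f) = evA f from
      Ideal.Quotient.liftₐ_apply I evA hevA0 _ ▸ Ideal.Quotient.lift_mk I _ _]
    exact hevA f a
  have hinj : Function.Injective Φ := by
    rw [injective_iff_map_eq_zero]
    intro x hx
    obtain ⟨f, rfl⟩ := Ideal.Quotient.mk_surjective x
    have hnil : IsNilpotent (Ideal.Quotient.mk I f) := by
      rw [nilpotent_iff_mem_prime]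
      intro J hJ
      haveI := hJ
      obtain ⟨a, haS, hiff⟩ := point_of_max J (IsArtinianRing.isMaximal_of_isPrime J)
      rw [hiff]
      rw [hΦmk f] at hx
      exact congrFun hx ⟨a, haS⟩
    exact hnil.eq_zero
  have hsurj : Function.Surjective Φ := by
    intro g
    obtain ⟨f, hf⟩ := exists_mvpoly_eval_eq
      (fun a : {a : Fin n → K // ∀ f ∈ I, eval a f = 0} => a.1) Subtype.val_injective g
    exact ⟨Ideal.Quotient.mk I f, by rw [hΦmk]; exact funext hf⟩
  let e := AlgEquiv.ofBijective Φ ⟨hinj, hsurj⟩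
  have hcard : Module.finrank K A = Fintype.card {a : Fin n → K // ∀ f ∈ I, eval a f = 0} := by
    rw [e.toLinearEquiv.finrank_eq, Module.finrank_pi]
  refine ⟨?_, e, hΦmk⟩
  rw [Nat.card_eq_fintype_card, hcard]
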